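/- Let (Ω, P) be a probability space, N ≥ 2, u† : Fin N → ℝ with Σᵢ u†(i) = 0, and for each ordered pair (a,b) with a ≠ b let ε_{a,b} : Ω → ℝ be an integrable random variable with E[ε_{a,b}] = 0. Define ρ_{a,b}(ω) = u†(a) − u†(b) + ε_{a,b}(ω) and U(a)(ω) = (1/N)·Σ_{b ≠ a} ρ_{a,b}(ω). Then for all i ≠ j, E[U(i) − U(j)] = u†(i) − u†(j); that is, the potential method is an unbiased estimator of the preference function ρ†(i,j) = u†(i) − u†(j). -/

import Mathlib

open Finset MeasureTheory

/-- The potential method is an unbiased estimator of the preference function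
`ρ†(i,j) = u†(i) - u†(j)`. -/
theorem potential_method_unbiased_preference
    {Ω : Type*} [MeasurableSpace Ω] (μ : Measure Ω) [IsProbabilityMeasure μ]
    (N : ℕ) (hN : 2 ≤ N)
    (udag : Fin N → ℝ) (hu : ∑ i, udag i = 0)
    (ε : Fin N → Fin N → Ω → ℝ)
    (hint : ∀ a b, a ≠ b → Integrable (ε a b) μ)
    (hmean : ∀ a b, a ≠ b → ∫ ω, ε a b ω ∂μ = 0)
    (ρ : Fin N → Fin N → Ω → ℝ)
    (hρ : ∀ a b, a ≠ b → ∀ ω, ρ a b ω = udag a - udag b + ε a b ω)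
    (U : Fin N → Ω → ℝ)
    (hU : ∀ a ω, U a ω = (1 / (N : ℝ)) * ∑ b ∈ univ \ {a}, ρ a b ω) :
    ∀ i j : Fin N, i ≠ j →
      ∫ ω, (U i ω - U j ω) ∂μ = udag i - udag j := by
  have hN0 : (N : ℝ) ≠ 0 := by positivity
  -- rewrite U a
  have hUeq : ∀ a, U a = fun ω => udag a + (1 / (N : ℝ)) * ∑ b ∈ univ \ {a}, ε a b ω := by
    intro a
    funext ω
    rw [hU a ω]
    have h1 : ∑ b ∈ univ \ {a}, ρ a b ω
        = ∑ b ∈ univ \ {a}, (udag a - udag b + ε a b ω) := by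
      apply Finset.sum_congr rfl
      intro b hb
      simp only [Finset.mem_sdiff, Finset.mem_singleton] at hb
      exact hρ a b (Ne.symm hb.2) ω
    have hcard : (univ \ {a} : Finset (Fin N)).card = N - 1 := by
      simp [Finset.card_sdiff]
    have h2 : ∑ b ∈ univ \ {a}, udag b = -udag a := by
      have := Finset.sum_sdiff_eq_sub (f := udag) (Finset.subset_univ ({a} : Finset (Fin N)))
      rw [this, hu]
      simp
    rw [h1, Finset.sum_add_distrib, Finset.sum_sub_distrib, h2,
      Finset.sum_const, hcard]
    field_simp
    rw [nsmul_eq_mul, Nat.cast_sub (by omega : 1 ≤ N), Nat.cast_one]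
    ring
  have hintS : ∀ a : Fin N, Integrable (fun ω => ∑ b ∈ univ \ {a}, ε a b ω) μ := by
    intro a
    apply integrable_finset_sum
    intro b hb
    simp only [Finset.mem_sdiff, Finset.mem_singleton] at hb
    exact hint a b (Ne.symm hb.2)
  have hintU : ∀ a, Integrable (U a) μ := by
    intro a
    rw [hUeq a]
    exact (integrable_const _).add ((hintS a).const_mul _)
  have hIU : ∀ a, ∫ ω, U a ω ∂μ = udag a := by
    intro a
    rw [hUeq a]
    rw [integral_add (integrable_const _) ((hintS a).const_mul _),
      integral_const_mul, integral_finset_sum]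
    · have : ∀ b ∈ univ \ {a}, ∫ ω, ε a b ω ∂μ = 0 := by
        intro b hb
        simp only [Finset.mem_sdiff, Finset.mem_singleton] at hb
        exact hmean a b (Ne.symm hb.2)
      rw [Finset.sum_congr rfl this]
      simp
    · intro b hb
      simp only [Finset.mem_sdiff, Finset.mem_singleton] at hb
      exact hint a b (Ne.symm hb.2)
  intro i j _
  rw [integral_sub (hintU i) (hintU j), hIU, hIU]
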